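/- For any n×n complex matrix A and any α with 0 ≤ α ≤ 1, the block matrix [[|A|^{2α}, A*], [A, |A*|^{2(1-α)}]] is positive semidefinite. -/

import Mathlib

open Matrix
open scoped ComplexOrder

/-- The `j`-th largest singular value of a square complex matrix (`j : Fin m`, zero-indexed,
so `sv A 0` is the largest singular value). It is defined as the square root of the `j`-th
largest eigenvalue of `Aᴴ * A`. -/
noncomputable def sv {m : ℕ} (A : Matrix (Fin m) (Fin m) ℂ) (j : Fin m) : ℝ :=
  Real.sqrt ((Matrix.isHermitian_conjTranspose_mul_self A).eigenvalues
    (Tuple.sort ((Matrix.isHermitian_conjTranspose_mul_self A).eigenvalues) j.rev))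

/-- The absolute value `|A| = (Aᴴ A)^{1/2}` of a square complex matrix. -/
noncomputable def matAbs {m : ℕ} (A : Matrix (Fin m) (Fin m) ℂ) : Matrix (Fin m) (Fin m) ℂ :=
  (Matrix.posSemidef_conjTranspose_mul_self A).1.cfc Real.sqrt

/-- The `2n × 2n` block matrix `[[A, B], [C, D]]`, reindexed by `Fin (n + n)`. -/
noncomputable def blk {n : ℕ} (A B C D : Matrix (Fin n) (Fin n) ℂ) :
    Matrix (Fin (n + n)) (Fin (n + n)) ℂ :=
  Matrix.reindex finSumFinEquiv finSumFinEquiv (Matrix.fromBlocks A B C D)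

/-- `f(P)` for a Hermitian matrix `P`, via the spectral functional calculus. -/
noncomputable def herCfc {m : ℕ} {P : Matrix (Fin m) (Fin m) ℂ} (hP : P.IsHermitian)
    (f : ℝ → ℝ) : Matrix (Fin m) (Fin m) ℂ :=
  hP.cfc f

/-- `|A| ^ r` (real power of the absolute value), via the functional calculus. -/
noncomputable def matAbsPow {m : ℕ} (A : Matrix (Fin m) (Fin m) ℂ) (r : ℝ) :
    Matrix (Fin m) (Fin m) ℂ :=
  herCfc (P := (Matrix.posSemidef_conjTranspose_mul_self A).1.cfc Real.sqrt)
    (by rw [← Matrix.IsHermitian.cfc_eq]; exact cfc_predicate _ _) (fun t => t ^ r)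

/-- `f(|A|)`, via the functional calculus. -/
noncomputable def matAbsCfc {m : ℕ} (A : Matrix (Fin m) (Fin m) ℂ) (f : ℝ → ℝ) :
    Matrix (Fin m) (Fin m) ℂ :=
  herCfc (P := (Matrix.posSemidef_conjTranspose_mul_self A).1.cfc Real.sqrt)
    (by rw [← Matrix.IsHermitian.cfc_eq]; exact cfc_predicate _ _) f

/-- The operator norm: the largest singular value. -/
noncomputable def opNorm {m : ℕ} (A : Matrix (Fin m) (Fin m) ℂ) : ℝ :=
  ⨆ j, sv A j


section Aux

variable {m : ℕ}

lemma contOn_finite {s : Set ℝ} (hs : s.Finite) (f : ℝ → ℝ) : ContinuousOn f s := by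
  rw [continuousOn_iff_continuous_restrict]
  have : Finite s := hs.to_subtype
  exact continuous_of_discreteTopology

lemma contOn_spec (f : ℝ → ℝ) (M : Matrix (Fin m) (Fin m) ℂ) :
    ContinuousOn f (spectrum ℝ M) :=
  contOn_finite M.finite_real_spectrum f

lemma mul_pow_comm (A : Matrix (Fin m) (Fin m) ℂ) (k : ℕ) :
    A * (Aᴴ * A) ^ k = (A * Aᴴ) ^ k * A := by
  induction k with
  | zero => simp
  | succ k ih =>
    rw [pow_succ' (Aᴴ * A), pow_succ' (A * Aᴴ), mul_assoc (A * Aᴴ), ← ih]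
    simp only [← mul_assoc]

lemma mul_aeval_comm (A : Matrix (Fin m) (Fin m) ℂ) (q : Polynomial ℝ) :
    A * Polynomial.aeval (Aᴴ * A) q = Polynomial.aeval (A * Aᴴ) q * A := by
  rw [Polynomial.aeval_eq_sum_range (x := Aᴴ * A), Polynomial.aeval_eq_sum_range (x := A * Aᴴ),
    Finset.mul_sum, Finset.sum_mul]
  refine Finset.sum_congr rfl fun k _ => ?_
  rw [mul_smul_comm, smul_mul_assoc, mul_pow_comm]

lemma mul_cfc_comm (A : Matrix (Fin m) (Fin m) ℂ) (f : ℝ → ℝ) :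
    A * cfc f (Aᴴ * A) = cfc f (A * Aᴴ) * A := by
  have hH : IsSelfAdjoint (Aᴴ * A) := isHermitian_conjTranspose_mul_self A
  have hK : IsSelfAdjoint (A * Aᴴ) := isHermitian_mul_conjTranspose_self A
  have hfin : ((spectrum ℝ (Aᴴ * A)) ∪ (spectrum ℝ (A * Aᴴ))).Finite :=
    (Matrix.finite_real_spectrum).union (Matrix.finite_real_spectrum)
  set s : Finset ℝ := hfin.toFinset with hs
  set q : Polynomial ℝ := Lagrange.interpolate s id f with hq
  have hnode : ∀ x ∈ s, Polynomial.eval x q = f x := by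
    intro x hx
    simpa [hq] using Lagrange.eval_interpolate_at_node (v := id) (r := f) (Set.injOn_id _) hx
  have h1 : cfc f (Aᴴ * A) = cfc q.eval (Aᴴ * A) := by
    refine cfc_congr fun x hx => ?_
    exact (hnode x (by simp [hs, hfin.mem_toFinset.2 (Set.mem_union_left _ hx)])).symm
  have h2 : cfc f (A * Aᴴ) = cfc q.eval (A * Aᴴ) := by
    refine cfc_congr fun x hx => ?_
    exact (hnode x (by simp [hs, hfin.mem_toFinset.2 (Set.mem_union_right _ hx)])).symm
  rw [h1, h2, cfc_polynomial q (Aᴴ * A) hH, cfc_polynomial q (A * Aᴴ) hK, mul_aeval_comm]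

lemma cfc_posSemidef (M : Matrix (Fin m) (Fin m) ℂ) (f : ℝ → ℝ) (hf : ∀ t, 0 ≤ f t) :
    (cfc f M).PosSemidef := by
  have hsa : IsSelfAdjoint (cfc (fun t => Real.sqrt (f t)) M) := cfc_predicate _ M
  have h : cfc f M = (cfc (fun t => Real.sqrt (f t)) M)ᴴ * cfc (fun t => Real.sqrt (f t)) M := by
    rw [← star_eq_conjTranspose, hsa.star_eq,
      ← cfc_mul _ _ M (contOn_spec _ M) (contOn_spec _ M)]
    exact cfc_congr fun x _ => (Real.mul_self_sqrt (hf x)).symm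
  rw [h]
  exact posSemidef_conjTranspose_mul_self _

lemma spec_subset_nonneg {M : Matrix (Fin m) (Fin m) ℂ} (hM : M.PosSemidef) :
    spectrum ℝ M ⊆ Set.Ici 0 := by
  rw [hM.1.spectrum_real_eq_range_eigenvalues]
  rintro x ⟨i, rfl⟩
  exact hM.eigenvalues_nonneg i

/-- The indicator of the support. -/
noncomputable def chi (t : ℝ) : ℝ := if t = 0 then 0 else 1

lemma mul_cfc_chi (A : Matrix (Fin m) (Fin m) ℂ) : A * cfc chi (Aᴴ * A) = A := by
  have hH : IsSelfAdjoint (Aᴴ * A) := isHermitian_conjTranspose_mul_self A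
  have hsa : IsSelfAdjoint (cfc (fun t => 1 - chi t) (Aᴴ * A)) := cfc_predicate _ _
  have hz : A * cfc (fun t => 1 - chi t) (Aᴴ * A) = 0 := by
    rw [← conjTranspose_mul_self_eq_zero]
    have h1 : (A * cfc (fun t => 1 - chi t) (Aᴴ * A))ᴴ =
        cfc (fun t => 1 - chi t) (Aᴴ * A) * Aᴴ := by
      rw [conjTranspose_mul, ← star_eq_conjTranspose (cfc _ _), hsa.star_eq]
    have e1 : cfc (fun t : ℝ => t * (1 - chi t)) (Aᴴ * A) =
        (Aᴴ * A) * cfc (fun t => 1 - chi t) (Aᴴ * A) := by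
      rw [cfc_mul _ _ _ (contOn_spec _ _) (contOn_spec _ _), cfc_id' ℝ (Aᴴ * A) hH]
    have e2 : cfc (fun t : ℝ => (1 - chi t) * (t * (1 - chi t))) (Aᴴ * A) =
        cfc (fun t => 1 - chi t) (Aᴴ * A) * ((Aᴴ * A) * cfc (fun t => 1 - chi t) (Aᴴ * A)) := by
      rw [cfc_mul _ _ _ (contOn_spec _ _) (contOn_spec _ _), e1]
    have e3 : (fun t : ℝ => (1 - chi t) * (t * (1 - chi t))) = fun _ => (0:ℝ) := by
      funext t; by_cases ht : t = 0 <;> simp [chi, ht]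
    rw [h1, mul_assoc, ← mul_assoc Aᴴ A, ← e2, e3, cfc_const_zero ℝ (Aᴴ * A)]
  have key : A * (cfc chi (Aᴴ * A) + cfc (fun t => 1 - chi t) (Aᴴ * A)) = A := by
    rw [← cfc_add (Aᴴ * A) _ _ (contOn_spec _ _) (contOn_spec _ _)]
    have : (fun t => chi t + (1 - chi t)) = fun _ : ℝ => (1 : ℝ) := by
      funext t; ring
    rw [this, cfc_const_one ℝ _ hH, mul_one]
  rw [mul_add, hz, add_zero] at key
  exact key

lemma sqrt_eq_cfc (A : Matrix (Fin m) (Fin m) ℂ) :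
    (Matrix.posSemidef_conjTranspose_mul_self A).1.cfc Real.sqrt = cfc Real.sqrt (Aᴴ * A) := by
  rw [(isHermitian_conjTranspose_mul_self A).cfc_eq]

lemma matAbsPow_eq (A : Matrix (Fin m) (Fin m) ℂ) (r : ℝ) :
    matAbsPow A r = cfc (fun t : ℝ => Real.sqrt t ^ r) (Aᴴ * A) := by
  have hH : IsSelfAdjoint (Aᴴ * A) := isHermitian_conjTranspose_mul_self A
  have h1 : matAbsPow A r =
      cfc (fun t : ℝ => t ^ r) ((Matrix.posSemidef_conjTranspose_mul_self A).1.cfc Real.sqrt) :=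
    (Matrix.IsHermitian.cfc_eq _ _).symm
  rw [h1, sqrt_eq_cfc]
  exact (cfc_comp (fun t : ℝ => t ^ r) Real.sqrt (Aᴴ * A) hH
    (contOn_finite ((Matrix.finite_real_spectrum).image _) _) (contOn_spec _ _)).symm

end Aux
theorem abs_power_block_posSemidef {n : ℕ} (A : Matrix (Fin n) (Fin n) ℂ)
    (α : ℝ) (hα0 : 0 ≤ α) (hα1 : α ≤ 1) :
    (blk (matAbsPow A (2 * α)) Aᴴ A (matAbsPow Aᴴ (2 * (1 - α)))).PosSemidef := by
  have h1α : (0:ℝ) ≤ 1 - α := by linarith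
  have hHsa : IsSelfAdjoint (Aᴴ * A) := isHermitian_conjTranspose_mul_self A
  have hKsa : IsSelfAdjoint (A * Aᴴ) := isHermitian_mul_conjTranspose_self A
  set p : ℝ → ℝ := fun t => Real.sqrt t ^ α with hp
  set q : ℝ → ℝ := fun t => Real.sqrt t ^ (1 - α) with hq
  set g : ℝ → ℝ := fun t => (Real.sqrt t)⁻¹ with hg
  set r : ℝ → ℝ := fun t => q t * q t * (1 - g t * (g t * t)) with hrdef
  set P : Matrix (Fin n) (Fin n) ℂ := cfc p (Aᴴ * A) with hP
  set Q : Matrix (Fin n) (Fin n) ℂ := cfc q (A * Aᴴ) with hQ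
  set G : Matrix (Fin n) (Fin n) ℂ := cfc g (Aᴴ * A) with hG
  set S : Matrix (Fin n) (Fin n) ℂ := cfc (fun t => Real.sqrt (r t)) (A * Aᴴ) with hS
  have hPsa : IsSelfAdjoint P := cfc_predicate _ _
  have hQsa : IsSelfAdjoint Q := cfc_predicate _ _
  have hGsa : IsSelfAdjoint G := cfc_predicate _ _
  have hSsa : IsSelfAdjoint S := cfc_predicate _ _
  have hPH : Pᴴ = P := by rw [← star_eq_conjTranspose]; exact hPsa.star_eq
  have hQH : Qᴴ = Q := by rw [← star_eq_conjTranspose]; exact hQsa.star_eq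
  have hSH : Sᴴ = S := by rw [← star_eq_conjTranspose]; exact hSsa.star_eq
  have hg_one : ∀ t : ℝ, 0 < t → g t * (g t * t) = 1 := by
    intro t ht
    have hs : Real.sqrt t ≠ 0 := ne_of_gt (Real.sqrt_pos.2 ht)
    rw [hg]; dsimp only
    rw [← Real.mul_self_sqrt ht.le]
    field_simp
    rw [Real.sqrt_sq (Real.sqrt_nonneg t)]
  have hg_zero : ∀ t : ℝ, t ≤ 0 → g t = 0 := by
    intro t ht
    rw [hg]; dsimp only
    rw [Real.sqrt_eq_zero'.2 ht, _root_.inv_zero]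
  have hrnn : ∀ t, 0 ≤ r t := by
    intro t
    rcases le_or_gt t 0 with ht | ht
    · rw [hrdef]; dsimp only
      rw [hg_zero t ht]
      norm_num
      exact mul_self_nonneg _
    · rw [hrdef]; dsimp only
      rw [hg_one t ht]
      simp
  have hspecH := spec_subset_nonneg (Matrix.posSemidef_conjTranspose_mul_self A)
  have hB2 : matAbsPow A (2 * α) = P * P := by
    rw [matAbsPow_eq, hP, ← cfc_mul p p (Aᴴ * A) (contOn_spec _ _) (contOn_spec _ _)]
    refine cfc_congr fun t _ => ?_
    rw [hp]; dsimp only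
    rw [← Real.rpow_add_of_nonneg (Real.sqrt_nonneg t) hα0 hα0, two_mul]
  have hC2 : matAbsPow Aᴴ (2 * (1 - α)) = Q * Q := by
    have h := matAbsPow_eq Aᴴ (2 * (1 - α))
    rw [conjTranspose_conjTranspose] at h
    rw [h, hQ, ← cfc_mul q q (A * Aᴴ) (contOn_spec _ _) (contOn_spec _ _)]
    refine cfc_congr fun t _ => ?_
    rw [hq]; dsimp only
    rw [← Real.rpow_add_of_nonneg (Real.sqrt_nonneg t) h1α h1α, two_mul]
  have hcore : cfc q (Aᴴ * A) * (G * P) = cfc chi (Aᴴ * A) := by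
    rw [hG, hP, ← cfc_mul g p _ (contOn_spec _ _) (contOn_spec _ _),
      ← cfc_mul q _ _ (contOn_spec _ _) (contOn_spec _ _)]
    refine cfc_congr fun t ht => ?_
    have ht0 : (0:ℝ) ≤ t := hspecH ht
    rcases eq_or_lt_of_le ht0 with h | h
    · rw [← h]; simp [chi, hq, hg, hp]
    · have hs0 : 0 < Real.sqrt t := Real.sqrt_pos.2 h
      have he : q t * (g t * p t) = 1 := by
        rw [hq, hp, hg]; dsimp only
        rw [← Real.rpow_neg_one (Real.sqrt t), ← Real.rpow_add hs0, ← Real.rpow_add hs0]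
        norm_num
      rw [he, chi]
      simp [ne_of_gt h]
  have hQWP : Q * (A * G) * P = A := by
    have e : Q * (A * G) = A * (cfc q (Aᴴ * A) * G) := by
      rw [hQ, ← mul_assoc, ← mul_cfc_comm A q, mul_assoc]
    rw [e, mul_assoc, mul_assoc (cfc q (Aᴴ * A)) G P, hcore, mul_cfc_chi]
  have hAG : A * G = cfc g (A * Aᴴ) * A := by rw [hG]; exact mul_cfc_comm A g
  have hAGt : (A * G)ᴴ = G * Aᴴ := by
    rw [conjTranspose_mul, ← star_eq_conjTranspose G, hGsa.star_eq]
  have hWW : (A * G) * (A * G)ᴴ = cfc (fun t => g t * (g t * t)) (A * Aᴴ) := by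
    calc (A * G) * (A * G)ᴴ = cfc g (A * Aᴴ) * (A * (G * Aᴴ)) := by
            rw [hAGt, hAG, mul_assoc]
      _ = cfc g (A * Aᴴ) * ((A * G) * Aᴴ) := by rw [mul_assoc]
      _ = cfc g (A * Aᴴ) * (cfc g (A * Aᴴ) * (A * Aᴴ)) := by rw [hAG, mul_assoc]
      _ = cfc g (A * Aᴴ) * (cfc g (A * Aᴴ) * cfc (fun t : ℝ => t) (A * Aᴴ)) := by
            rw [cfc_id' ℝ (A * Aᴴ) hKsa]
      _ = cfc (fun t => g t * (g t * t)) (A * Aᴴ) := by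
            rw [← cfc_mul g (fun t : ℝ => t) _ (contOn_spec _ _) (contOn_spec _ _),
              ← cfc_mul g _ _ (contOn_spec _ _) (contOn_spec _ _)]
  have hsplit : Q * ((A * G) * (A * G)ᴴ) * Q + cfc r (A * Aᴴ) = Q * Q := by
    rw [hWW, hQ,
      ← cfc_mul q (fun t => g t * (g t * t)) _ (contOn_spec _ _) (contOn_spec _ _),
      ← cfc_mul _ q _ (contOn_spec _ _) (contOn_spec _ _),
      ← cfc_add (A * Aᴴ) _ r (contOn_spec _ _) (contOn_spec _ _),
      ← cfc_mul q q _ (contOn_spec _ _) (contOn_spec _ _)]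
    refine cfc_congr fun t _ => ?_
    rw [hrdef]; dsimp only
    ring
  have hSS : Sᴴ * S = cfc r (A * Aᴴ) := by
    rw [hSH, hS, ← cfc_mul _ _ _ (contOn_spec _ _) (contOn_spec _ _)]
    exact cfc_congr fun t _ => Real.mul_self_sqrt (hrnn t)
  -- entries of Yᴴ * Y
  have e12 : Pᴴ * ((A * G)ᴴ * Q) = Aᴴ := by
    have h := congrArg conjTranspose hQWP
    rw [conjTranspose_mul, conjTranspose_mul, hQH] at h
    exact h
  have e21 : ((A * G)ᴴ * Q)ᴴ * P = A := by
    rw [conjTranspose_mul, conjTranspose_conjTranspose, hQH, mul_assoc, ← mul_assoc Q, hQWP]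
  have e22 : ((A * G)ᴴ * Q)ᴴ * ((A * G)ᴴ * Q) + Sᴴ * S = matAbsPow Aᴴ (2 * (1 - α)) := by
    rw [conjTranspose_mul, conjTranspose_conjTranspose, hQH, hSS, hC2, ← hsplit]
    congr 1
    simp only [← mul_assoc]
  -- assemble
  unfold blk
  rw [reindex_apply]
  refine (posSemidef_submatrix_equiv finSumFinEquiv.symm).2 ?_
  have hfb : fromBlocks (matAbsPow A (2 * α)) Aᴴ A (matAbsPow Aᴴ (2 * (1 - α))) =
      (fromBlocks P ((A * G)ᴴ * Q) 0 0)ᴴ * (fromBlocks P ((A * G)ᴴ * Q) 0 0) +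
      (fromBlocks 0 0 0 S)ᴴ * (fromBlocks 0 0 0 S) := by
    rw [fromBlocks_conjTranspose, fromBlocks_multiply, fromBlocks_conjTranspose,
      fromBlocks_multiply, fromBlocks_add]
    simp only [conjTranspose_zero, Matrix.mul_zero, Matrix.zero_mul, add_zero, zero_add]
    rw [e12, e21, e22, hPH, ← hB2]
  rw [hfb]
  exact (Matrix.posSemidef_conjTranspose_mul_self _).add
    (Matrix.posSemidef_conjTranspose_mul_self _)
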